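/- Let Ω_d be a sequence of metric probability spaces whose concentration functions satisfy α_d(ε) ≤ exp(-a·ε²·d) for constants a > 0, with median pairwise distance normalized so that the median of ρ(x, ·) equals 1 + o(1) uniformly. Let X_d ⊆ Ω_d be i.i.d. samples of size n_d with log n_d = o(d). Then for each ε > 0, with probability tending to 1 as d → ∞, every pair of distinct datapoints x, y ∈ X_d satisfies |ρ(x, y) - 1| < ε. -/

import Mathlib

open MeasureTheory Filter
open scoped ENNReal

lemma dist_conc {Ω : Type*} [MetricSpace Ω] [MeasurableSpace Ω] [BorelSpace Ω]
    (μ : Measure Ω) (δ : ℝ) (K : ℝ≥0∞)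
    (hconc : ∀ A : Set Ω, MeasurableSet A → 1/2 ≤ μ A →
      μ (Metric.thickening δ A)ᶜ ≤ K)
    (x : Ω) (R : ℝ)
    (h1 : 1/2 ≤ μ {y | R ≤ dist x y}) (h2 : 1/2 ≤ μ {y | dist x y ≤ R}) :
    μ {y | δ ≤ |dist x y - R|} ≤ K + K := by
  have hc1 : IsClosed {y : Ω | R ≤ dist x y} :=
    isClosed_le continuous_const (continuous_const.dist continuous_id)
  have hc2 : IsClosed {y : Ω | dist x y ≤ R} :=
    isClosed_le (continuous_const.dist continuous_id) continuous_const
  have hsub : {y : Ω | δ ≤ |dist x y - R|} ⊆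
      (Metric.thickening δ {y : Ω | dist x y ≤ R})ᶜ ∪
      (Metric.thickening δ {y : Ω | R ≤ dist x y})ᶜ := by
    intro y hy
    simp only [Set.mem_setOf_eq] at hy
    rcases le_abs.mp hy with h | h
    · left
      intro hmem
      rcases Metric.mem_thickening_iff.mp hmem with ⟨z, hz, hd⟩
      have : dist x y ≤ dist x z + dist z y := dist_triangle x z y
      rw [dist_comm z y] at this
      simp only [Set.mem_setOf_eq] at hz
      linarith
    · right
      intro hmem
      rcases Metric.mem_thickening_iff.mp hmem with ⟨z, hz, hd⟩
      have : dist x z ≤ dist x y + dist y z := dist_triangle x y z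
      simp only [Set.mem_setOf_eq] at hz
      linarith
  calc μ {y | δ ≤ |dist x y - R|} ≤ _ := measure_mono hsub
    _ ≤ _ := measure_union_le _ _
    _ ≤ K + K := add_le_add (hconc _ hc2.measurableSet h2) (hconc _ hc1.measurableSet h1)


lemma inner_union_bound {Ω : Type*} [MeasurableSpace Ω]
    (μ : Measure Ω) [IsProbabilityMeasure μ]
    (S : Ω → Ω → Prop) (β : ℝ≥0∞)
    (hsym : ∀ z y, S z y → S y z)
    (hsec_le : ∀ z, μ {y | S y z} ≤ β) :
    ∀ (N : ℕ) (M : Set (Fin N → Ω)), MeasurableSet M →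
      (M ⊆ {x | ∃ i j, i ≠ j ∧ S (x i) (x j)}) →
      (Measure.pi fun _ : Fin N => μ) M ≤ (N * N : ℕ) * β := by
  intro N
  induction N with
  | zero =>
    intro M _ hMsub
    have : M ⊆ ∅ := by
      intro x hx
      obtain ⟨i, _, _, _⟩ := hMsub hx
      exact absurd i.2 (by omega)
    simp [Set.subset_empty_iff.mp this]
  | succ N ih =>
    intro M hMmeas hMsub
    set e := MeasurableEquiv.piFinSuccAbove (fun _ : Fin (N+1) => Ω) 0 with he
    have hpres : MeasurePreserving e.symm
        ((μ).prod (Measure.pi fun _ : Fin N => μ))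
        (Measure.pi fun _ : Fin (N+1) => μ) :=
      (measurePreserving_piFinSuccAbove (fun _ : Fin (N+1) => μ) 0).symm e
    set s : Set (Ω × (Fin N → Ω)) := e.symm ⁻¹' M with hs
    have hsmeas : MeasurableSet s := e.symm.measurable hMmeas
    have hkey : (Measure.pi fun _ : Fin (N+1) => μ) M
        = ((μ).prod (Measure.pi fun _ : Fin N => μ)) s :=
      (hpres.measure_preimage hMmeas.nullMeasurableSet).symm
    have hsecM : ∀ y w, ((y, w) ∈ s ↔ Fin.insertNth 0 y w ∈ M) := by
      intro y w
      constructor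
      · intro h; exact h
      · intro h; exact h
    -- the section function
    set g : (Fin N → Ω) → ℝ≥0∞ := fun w => μ ((fun y => (y, w)) ⁻¹' s) with hg
    have hgmeas : Measurable g := measurable_measure_prodMk_right hsmeas
    have hg1 : ∀ w, g w ≤ 1 := fun w => prob_le_one
    -- the exceptional measurable set
    set B : Set (Fin N → Ω) := {w | (N : ℝ≥0∞) * β < g w} with hB
    have hBmeas : MeasurableSet B := measurableSet_lt measurable_const hgmeas
    -- outside the bad set of level N, sections are small
    have hout : ∀ w, w ∉ {x : Fin N → Ω | ∃ i j, i ≠ j ∧ S (x i) (x j)} →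
        g w ≤ (N : ℝ≥0∞) * β := by
      intro w hw
      have hsub : ((fun y => (y, w)) ⁻¹' s) ⊆ ⋃ j : Fin N, {y | S y (w j)} := by
        intro y hy
        have hy' : Fin.insertNth 0 y w ∈ M := hy
        obtain ⟨k, l, hkl, hS⟩ := hMsub hy'
        have hzero : (Fin.insertNth (0 : Fin (N+1)) y w : Fin (N+1) → Ω) 0 = y :=
          by simp
        have hsucc : ∀ m : Fin N,
            (Fin.insertNth (0 : Fin (N+1)) y w : Fin (N+1) → Ω) m.succ = w m := by
          intro m
          rw [← Fin.succAbove_zero]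
          exact Fin.insertNth_apply_succAbove (α := fun _ : Fin (N+1) => Ω) 0 y w m
        rcases Fin.eq_zero_or_eq_succ k with rfl | ⟨k', rfl⟩
        · rcases Fin.eq_zero_or_eq_succ l with rfl | ⟨l', rfl⟩
          · exact absurd rfl hkl
          · rw [hzero, hsucc] at hS
            exact Set.mem_iUnion.mpr ⟨l', hS⟩
        · rcases Fin.eq_zero_or_eq_succ l with rfl | ⟨l', rfl⟩
          · rw [hzero, hsucc] at hS
            exact Set.mem_iUnion.mpr ⟨k', hsym _ _ hS⟩
          · exfalso
            apply hw
            refine ⟨k', l', fun hc => hkl (by rw [hc]), ?_⟩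
            rw [hsucc, hsucc] at hS
            exact hS
      calc g w ≤ μ (⋃ j : Fin N, {y | S y (w j)}) := measure_mono hsub
        _ ≤ ∑ j : Fin N, μ {y | S y (w j)} := measure_iUnion_fintype_le _ _
        _ ≤ ∑ _j : Fin N, β := Finset.sum_le_sum fun j _ => hsec_le (w j)
        _ = (N : ℝ≥0∞) * β := by
            rw [Finset.sum_const, Finset.card_univ, Fintype.card_fin, nsmul_eq_mul]
    have hBsub : B ⊆ {x : Fin N → Ω | ∃ i j, i ≠ j ∧ S (x i) (x j)} := by
      intro w hw
      by_contra hc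
      exact absurd (hout w hc) (not_le.mpr hw)
    have hptwise : ∀ w, g w ≤ (N : ℝ≥0∞) * β + B.indicator (fun _ => 1) w := by
      intro w
      by_cases hw : w ∈ B
      · rw [Set.indicator_of_mem hw]
        exact le_add_left (hg1 w)
      · rw [Set.indicator_of_notMem hw, add_zero]
        exact not_lt.mp hw
    calc (Measure.pi fun _ : Fin (N+1) => μ) M
        = ∫⁻ w, g w ∂(Measure.pi fun _ : Fin N => μ) := by
          rw [hkey, Measure.prod_apply_symm hsmeas]
      _ ≤ ∫⁻ w, ((N : ℝ≥0∞) * β + B.indicator (fun _ => 1) w)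
            ∂(Measure.pi fun _ : Fin N => μ) := lintegral_mono hptwise
      _ = (N : ℝ≥0∞) * β + (Measure.pi fun _ : Fin N => μ) B := by
          rw [lintegral_add_left measurable_const, lintegral_const,
            lintegral_indicator_const hBmeas, measure_univ, mul_one, one_mul]
      _ ≤ (N : ℝ≥0∞) * β + (N * N : ℕ) * β := by
          exact add_le_add_right (ih B hBmeas hBsub) _
      _ = ((N + N * N : ℕ) : ℝ≥0∞) * β := by push_cast; rw [add_mul]
      _ ≤ ((N+1) * (N+1) : ℕ) * β := by
          refine mul_le_mul_left (Nat.cast_le.mpr ?_) β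
          nlinarith


/-- Under gaussian concentration `α_d(ε) ≤ exp(-a ε² d)`, medians of distance
functions uniformly `1 + o(1)`, and i.i.d. samples of size `n_d` with
`log n_d = o(d)`, for every `ε > 0` with probability tending to `1` all
pairwise distances between distinct datapoints lie within `ε` of `1`. -/
theorem pairwise_distances_concentrate
    (Ω : ℕ → Type*) [∀ d, MetricSpace (Ω d)] [∀ d, MeasurableSpace (Ω d)]
    [∀ d, BorelSpace (Ω d)]
    (μ : ∀ d, Measure (Ω d)) [∀ d, IsProbabilityMeasure (μ d)]
    (a : ℝ) (ha : 0 < a)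
    (hconc : ∀ d : ℕ, ∀ ε : ℝ, 0 < ε → ∀ A : Set (Ω d), MeasurableSet A →
      1/2 ≤ μ d A →
      μ d (Metric.thickening ε A)ᶜ ≤ ENNReal.ofReal (Real.exp (-a * ε ^ 2 * d)))
    (R : ∀ d, Ω d → ℝ)
    (hmed1 : ∀ d x, 1/2 ≤ μ d {y | R d x ≤ dist x y})
    (hmed2 : ∀ d x, 1/2 ≤ μ d {y | dist x y ≤ R d x})
    (η : ℕ → ℝ) (hη : Tendsto η atTop (nhds 0))
    (hR : ∀ d x, |R d x - 1| ≤ η d)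
    (n : ℕ → ℕ) (hn1 : ∀ d, 1 ≤ n d)
    (hn : Tendsto (fun d : ℕ => Real.log (n d) / d) atTop (nhds 0)) :
    ∀ ε : ℝ, 0 < ε →
      Tendsto
        (fun d : ℕ => (Measure.pi fun _ : Fin (n d) => μ d)
          {x | ∀ i j : Fin (n d), i ≠ j → |dist (x i) (x j) - 1| < ε})
        atTop (nhds 1) := by
  intro ε hε
  set c : ℝ := a * (ε/2)^2 with hc
  have hcpos : 0 < c := by positivity
  set b : ℕ → ℝ := fun d => (n d : ℝ)^2 * (2 * Real.exp (-c * d)) with hb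
  -- eventually η d ≤ ε/2
  have hηev : ∀ᶠ d in atTop, η d ≤ ε / 2 := by
    have := hη.eventually_lt_const (show (0:ℝ) < ε/2 by linarith)
    filter_upwards [this] with d hd using hd.le
  -- eventual lower bound on the good-set measure
  have key : ∀ᶠ d in atTop,
      1 - ENNReal.ofReal (b d) ≤ (Measure.pi fun _ : Fin (n d) => μ d)
        {x : Fin (n d) → Ω d | ∀ i j : Fin (n d), i ≠ j → |dist (x i) (x j) - 1| < ε} := by
    filter_upwards [hηev] with d hηd
    set K : ℝ≥0∞ := ENNReal.ofReal (Real.exp (-c * d)) with hK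
    have hconc' : ∀ A : Set (Ω d), MeasurableSet A → 1/2 ≤ μ d A →
        μ d (Metric.thickening (ε/2) A)ᶜ ≤ K := by
      intro A hA hμA
      have h := hconc d (ε/2) (by linarith) A hA hμA
      have heq : -a * (ε/2) ^ 2 * (d:ℝ) = -c * d := by rw [hc]; ring
      rwa [heq] at h
    have hsec : ∀ z : Ω d, μ d {y : Ω d | ε ≤ |dist y z - 1|} ≤ K + K := by
      intro z
      have hsub : {y : Ω d | ε ≤ |dist y z - 1|} ⊆ {y : Ω d | ε/2 ≤ |dist z y - R d z|} := by
        intro y hy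
        simp only [Set.mem_setOf_eq] at hy ⊢
        rw [dist_comm] at hy
        have h1 := hR d z
        have h2 : |dist z y - 1| - |R d z - 1| ≤ |dist z y - R d z| := by
          have := abs_sub_abs_le_abs_sub (dist z y - 1) (R d z - 1)
          simpa using this
        have h3 := abs_nonneg (R d z - 1)
        linarith
      exact (measure_mono hsub).trans
        (dist_conc (μ d) (ε/2) K hconc' z (R d z) (hmed1 d z) (hmed2 d z))
    have hsym : ∀ z y : Ω d, ε ≤ |dist z y - 1| → ε ≤ |dist y z - 1| := by
      intro z y h; rwa [dist_comm]
    have hbound := inner_union_bound (μ d) (fun z y => ε ≤ |dist z y - 1|) (K + K)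
      hsym hsec (n d)
    have hβ : ((n d * n d : ℕ) : ℝ≥0∞) * (K + K) ≤ ENNReal.ofReal (b d) := by
      have hKK : K + K = ENNReal.ofReal (2 * Real.exp (-c * d)) := by
        rw [hK, ← ENNReal.ofReal_add (Real.exp_pos _).le (Real.exp_pos _).le, two_mul]
      rw [hKK, ← ENNReal.ofReal_natCast (n d * n d),
        ← ENNReal.ofReal_mul (by positivity)]
      refine ENNReal.ofReal_le_ofReal (le_of_eq ?_)
      rw [hb]
      push_cast
      ring
    rw [measure_eq_iInf]
    refine le_iInf fun t => le_iInf fun hst => le_iInf fun ht => ?_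
    have htc : (Measure.pi fun _ : Fin (n d) => μ d) tᶜ ≤ ENNReal.ofReal (b d) := by
      refine ((hbound tᶜ ht.compl ?_).trans hβ)
      intro x hx
      have hxg : x ∉ {x : Fin (n d) → Ω d |
          ∀ i j : Fin (n d), i ≠ j → |dist (x i) (x j) - 1| < ε} := fun hg => hx (hst hg)
      simp only [Set.mem_setOf_eq, not_forall] at hxg
      obtain ⟨i, j, hij, hlt⟩ := hxg
      exact ⟨i, j, hij, not_lt.mp hlt⟩
    calc 1 - ENNReal.ofReal (b d) ≤ 1 - (Measure.pi fun _ : Fin (n d) => μ d) tᶜ :=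
          tsub_le_tsub_left htc 1
      _ = (Measure.pi fun _ : Fin (n d) => μ d) t := by
          rw [prob_compl_eq_one_sub ht,
            ENNReal.sub_sub_cancel ENNReal.one_ne_top prob_le_one]
  -- the real bound tends to zero
  have hB0 : Tendsto b atTop (nhds 0) := by
    have h1 : Tendsto (fun d : ℕ => 2 * (Real.log (n d) / d) - c) atTop (nhds (-c)) := by
      have := (hn.const_mul 2).sub_const c
      simpa using this
    have h2 : Tendsto (fun d : ℕ => (d:ℝ) * (2 * (Real.log (n d) / d) - c)) atTop atBot :=
      Tendsto.atTop_mul_neg (by linarith) tendsto_natCast_atTop_atTop h1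
    have h3 : Tendsto (fun d : ℕ => 2 * Real.log (n d) - c * d) atTop atBot := by
      refine h2.congr' ?_
      filter_upwards [eventually_ge_atTop 1] with d hd
      have hd0 : (d:ℝ) ≠ 0 := Nat.cast_ne_zero.mpr (by omega)
      field_simp
    have h4 : Tendsto (fun d : ℕ => Real.exp (2 * Real.log (n d) - c * d)) atTop (nhds 0) :=
      Real.tendsto_exp_atBot.comp h3
    have h5 : ∀ d : ℕ, b d = 2 * Real.exp (2 * Real.log (n d) - c * d) := by
      intro d
      have hn0 : (0:ℝ) < n d := by exact_mod_cast hn1 d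
      have heq : 2 * Real.log (n d) - c * d
          = Real.log (n d) + (Real.log (n d) + (-c * d)) := by ring
      rw [hb, heq, Real.exp_add, Real.exp_add, Real.exp_log hn0]
      ring
    rw [show b = fun d : ℕ => 2 * Real.exp (2 * Real.log (n d) - c * d) from funext h5]
    simpa using h4.const_mul 2
  -- squeeze
  have hlow : Tendsto (fun d : ℕ => 1 - ENNReal.ofReal (b d)) atTop (nhds 1) := by
    have h0 : Tendsto (fun d : ℕ => ENNReal.ofReal (b d)) atTop (nhds 0) := by
      have := ENNReal.tendsto_ofReal hB0
      simpa using this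
    have := ENNReal.Tendsto.sub (tendsto_const_nhds (x := (1:ℝ≥0∞))) h0
      (Or.inl ENNReal.one_ne_top)
    simpa using this
  refine tendsto_of_tendsto_of_tendsto_of_le_of_le' hlow tendsto_const_nhds key ?_
  exact Eventually.of_forall fun d => prob_le_one
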